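/- Let $x = \mathrm{diag}(x_1,\dots,x_n)$ be a real diagonal matrix, $g \in U(n)$, $\psi \in \mathbb{C}^n$, $c > 0$, and suppose $g^{-1} x g = x + cI - \bar\psi\psi^t$. Then for each $i$, $\prod_{j=1}^n (x_i - x_j + c) = |\psi_i|^2 \prod_{j \neq i}(x_i - x_j)$, provided the $x_j$ are distinct. -/
import Mathlib

open Matrix Finset Complex in
/-- Rank-one determinant: if `d i = 0`, then
`det (diagonal d + aᵀb) = a i * b i * ∏_{j ≠ i} d j`. -/
theorem det_diagonal_add_outer_of_diag_zero {n : ℕ} (d a b : Fin n → ℂ) (i : Fin n)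
    (hdi : d i = 0) :
    (Matrix.diagonal d + Matrix.of fun j k => a j * b k).det
      = a i * b i * ∏ j ∈ univ.erase i, d j := by
  set N : Matrix (Fin n) (Fin n) ℂ := Matrix.diagonal d + Matrix.of fun j k => a j * b k with hN
  have hrow : N = N.updateRow i (a i • b) := by
    ext j k
    by_cases h : j = i
    · subst h
      have hd0 : Matrix.diagonal d j k = 0 := by
        by_cases hk : j = k
        · subst hk; simp [hdi]
        · simp [Matrix.diagonal_apply_ne _ hk]
      simp [hN, hd0]
    · simp [Matrix.updateRow_ne h]
  have h1 : N.det = a i * (N.updateRow i b).det := by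
    conv_lhs => rw [hrow]
    exact Matrix.det_updateRow_smul N i (a i) b
  have h2 : (N.updateRow i b).det = ((Matrix.diagonal d).updateRow i b).det := by
    apply Matrix.det_eq_of_forall_row_eq_smul_add_const
      (fun j => if j = i then 0 else a j) i (by simp)
    intro j k
    by_cases h : j = i
    · subst h; simp
    · simp [Matrix.updateRow_ne h, hN, h, mul_comm]
  have h3 : ((Matrix.diagonal d).updateRow i b).det
      = b i * ∏ j ∈ univ.erase i, d j := by
    have := Matrix.cramer_transpose_apply (Matrix.diagonal d) b i
    rw [← this, Matrix.diagonal_transpose, Matrix.cramer_eq_adjugate_mulVec,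
      Matrix.adjugate_diagonal, Matrix.mulVec_diagonal, mul_comm]
  rw [h1, h2, h3]; ring

open Matrix Finset Complex in
theorem char_poly_identity_at_shifted_eigenvalue (n : ℕ) (x : Fin n → ℝ)
    (hx : ∀ i j, i ≠ j → x i ≠ x j)
    (g : Matrix (Fin n) (Fin n) ℂ) (hg : g ∈ Matrix.unitaryGroup (Fin n) ℂ)
    (ψ : Fin n → ℂ) (c : ℝ) (hc : 0 < c)
    (hmom : g⁻¹ * (Matrix.diagonal fun i => (x i : ℂ)) * g
        = (Matrix.diagonal fun i => (x i : ℂ)) + (c : ℂ) • 1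
          - Matrix.of (fun i j => (starRingEnd ℂ) (ψ i) * ψ j)) :
    ∀ i, (∏ j, ((x i : ℂ) - x j + c))
      = (Complex.normSq (ψ i) : ℂ) * ∏ j ∈ univ.erase i, ((x i : ℂ) - x j) := by
  intro i
  set D : Matrix (Fin n) (Fin n) ℂ := Matrix.diagonal fun j => (x j : ℂ) with hD
  set z : ℂ := (x i : ℂ) + c with hz
  -- invertibility of g
  have hstar : star g * g = 1 := hg.1
  have hginv : g⁻¹ = star g := Matrix.inv_eq_left_inv hstar
  have hgig : g⁻¹ * g = 1 := by rw [hginv]; exact hstar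
  have hdet : g⁻¹.det * g.det = 1 := by
    rw [← Matrix.det_mul, hgig, Matrix.det_one]
  -- determinant is invariant under conjugation
  have hconj : (z • (1 : Matrix (Fin n) (Fin n) ℂ) - D).det
      = (z • (1 : Matrix (Fin n) (Fin n) ℂ) - g⁻¹ * D * g).det := by
    have : z • (1 : Matrix (Fin n) (Fin n) ℂ) - g⁻¹ * D * g
        = g⁻¹ * (z • (1 : Matrix (Fin n) (Fin n) ℂ) - D) * g := by
      rw [Matrix.mul_sub, Matrix.sub_mul]
      congr 1
      rw [Matrix.mul_smul, Matrix.mul_one, Matrix.smul_mul, hgig]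
    rw [this, Matrix.det_mul, Matrix.det_mul]
    linear_combination (-((z • (1 : Matrix (Fin n) (Fin n) ℂ) - D).det)) * hdet
  -- left side: determinant of a diagonal matrix
  have hL : (z • (1 : Matrix (Fin n) (Fin n) ℂ) - D).det
      = ∏ j, ((x i : ℂ) - x j + c) := by
    have : z • (1 : Matrix (Fin n) (Fin n) ℂ) - D
        = Matrix.diagonal fun j => (x i : ℂ) - x j + c := by
      ext j k
      by_cases h : j = k
      · subst h
        simp [hD, Matrix.diagonal_apply_eq, hz]
        all_goals ring
      · simp [hD, Matrix.diagonal_apply_ne _ h, Matrix.one_apply_ne h]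
    rw [this, Matrix.det_diagonal]
  -- right side: determinant via the moment map equation
  have hR : (z • (1 : Matrix (Fin n) (Fin n) ℂ) - g⁻¹ * D * g).det
      = (Complex.normSq (ψ i) : ℂ) * ∏ j ∈ univ.erase i, ((x i : ℂ) - x j) := by
    have hM : z • (1 : Matrix (Fin n) (Fin n) ℂ) - g⁻¹ * D * g
        = Matrix.diagonal (fun j => (x i : ℂ) - x j)
          + Matrix.of fun j k => (starRingEnd ℂ) (ψ j) * ψ k := by
      rw [hmom]
      ext j k
      by_cases h : j = k
      · subst h
        simp [hD, hz, Matrix.diagonal_apply_eq]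
        all_goals ring
      · simp [hD, hz, Matrix.diagonal_apply_ne _ h, Matrix.one_apply_ne h]
        all_goals ring
    rw [hM, det_diagonal_add_outer_of_diag_zero _ _ _ i (by simp)]
    congr 1
    rw [mul_comm, Complex.mul_conj]
  rw [← hL, hconj, hR]
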